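/- arXiv:0806.1652 — 2 statements merged into one kernel-verified Lean document; each statement's English description precedes it below -/
import Mathlib

section
/- For every n ≥ 1, every tuning parameter η_n > 0 and all nonnegative real numbers a_n and b_n, the infimal coverage probability of the interval C_{H,n} = [θ̂_H − a_n, θ̂_H + b_n] is given by inf_{θ∈ℝ} P_{n,θ}(θ ∈ C_{H,n}) = Φ(n^{1/2}(a_n − η_n)) − Φ(−n^{1/2} b_n) if η_n ≤ a_n + b_n and a_n ≤ b_n; = Φ(n^{1/2}(b_n − η_n)) − Φ(−n^{1/2} a_n) if η_n ≤ a_n + b_n and a_n > b_n; and = 0 if η_n > a_n + b_n. -/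
open MeasureTheory ProbabilityTheory Filter
open scoped NNReal

open Set Topology

/-- Standard normal cumulative distribution function Φ. -/
noncomputable def stdNormCDF (x : ℝ) : ℝ :=
  ((gaussianReal 0 1) (Set.Iic x)).toReal

/-- Soft-thresholding (LASSO) estimator with threshold η, as a function of ȳ. -/
noncomputable def softThresh (η y : ℝ) : ℝ := Real.sign y * max (|y| - η) 0

/-- Hard-thresholding estimator with threshold η, as a function of ȳ. -/
noncomputable def hardThresh (η y : ℝ) : ℝ := if η < |y| then y else 0

/-- Adaptive LASSO estimator with tuning parameter η, as a function of ȳ. -/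
noncomputable def adaLasso (η y : ℝ) : ℝ := if |y| ≤ η then 0 else y - η ^ 2 / y

/-- Coverage probability `P_{n,θ}(θ ∈ [est(ȳ) - a, est(ȳ) + b])` in the
known-variance case (σ = 1), where ȳ ~ N(θ, 1/n). -/
noncomputable def cover (n : ℕ) (est : ℝ → ℝ) (a b θ : ℝ) : ℝ :=
  ((gaussianReal θ ((n : ℝ≥0))⁻¹)
    {y : ℝ | est y - a ≤ θ ∧ θ ≤ est y + b}).toReal

lemma stdNormCDF_mono : Monotone stdNormCDF := fun x y h =>
  ENNReal.toReal_mono (measure_ne_top _ _) (measure_mono (Iic_subset_Iic.2 h))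

lemma gaussianReal_singleton (θ : ℝ) {v : ℝ≥0} (hv : v ≠ 0) (x : ℝ) :
    gaussianReal θ v {x} = 0 :=
  gaussianReal_absolutelyContinuous θ hv (by simp)

lemma gaussian_map (n : ℕ) (hn : 1 ≤ n) (θ : ℝ) :
    (gaussianReal θ ((n : ℝ≥0))⁻¹).map (fun y => Real.sqrt n * (y - θ)) = gaussianReal 0 1 := by
  have hc : (fun y : ℝ => Real.sqrt n * (y - θ))
      = (fun z => Real.sqrt n * z) ∘ (fun y => y + (-θ)) := by
    funext y; simp [sub_eq_add_neg]
  have hg : Measurable fun z : ℝ => Real.sqrt n * z := measurable_const_mul _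
  have hf : Measurable fun y : ℝ => y + (-θ) := measurable_add_const _
  rw [hc, ← Measure.map_map hg hf]
  rw [gaussianReal_map_add_const (-θ), add_neg_cancel, gaussianReal_map_const_mul]
  have hn0 : (n : ℝ≥0) ≠ 0 := Nat.cast_ne_zero.2 (by omega)
  have h2 : (NNReal.mk ((Real.sqrt n)^2) (sq_nonneg _) : ℝ≥0) = (n : ℝ≥0) := by
    ext; simp [Real.sq_sqrt (by positivity : (0:ℝ) ≤ (n:ℝ))]
  rw [h2, mul_zero, mul_inv_cancel₀ hn0]

lemma meas_Iic (n : ℕ) (hn : 1 ≤ n) (θ x : ℝ) :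
    ((gaussianReal θ ((n : ℝ≥0))⁻¹) (Iic x)).toReal = stdNormCDF (Real.sqrt n * (x - θ)) := by
  have hs : (0:ℝ) < Real.sqrt n := Real.sqrt_pos.2 (by exact_mod_cast Nat.pos_of_ne_zero (by omega))
  have hm : Measurable fun y : ℝ => Real.sqrt n * (y - θ) := (measurable_id.sub_const θ).const_mul _
  rw [stdNormCDF, ← gaussian_map n hn θ, Measure.map_apply hm measurableSet_Iic]
  congr 2
  ext y
  simp only [mem_preimage, mem_Iic]
  constructor
  · intro h; nlinarith
  · intro h; nlinarith

lemma meas_Ioc (n : ℕ) (hn : 1 ≤ n) (θ : ℝ) {p q : ℝ} (h : p ≤ q) :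
    ((gaussianReal θ ((n : ℝ≥0))⁻¹) (Ioc p q)).toReal
      = stdNormCDF (Real.sqrt n * (q - θ)) - stdNormCDF (Real.sqrt n * (p - θ)) := by
  have hu : Iic p ∪ Ioc p q = Iic q := Iic_union_Ioc_eq_Iic h
  have hd : Disjoint (Iic p) (Ioc p q) := Iic_disjoint_Ioc le_rfl
  have hm : (gaussianReal θ ((n : ℝ≥0))⁻¹) (Iic p ∪ Ioc p q)
      = (gaussianReal θ ((n : ℝ≥0))⁻¹) (Iic p) + (gaussianReal θ ((n : ℝ≥0))⁻¹) (Ioc p q) :=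
    measure_union hd measurableSet_Ioc
  rw [hu] at hm
  have h1 : ((gaussianReal θ ((n : ℝ≥0))⁻¹) (Iic q)).toReal
      = ((gaussianReal θ ((n : ℝ≥0))⁻¹) (Iic p)).toReal
        + ((gaussianReal θ ((n : ℝ≥0))⁻¹) (Ioc p q)).toReal := by
    rw [hm, ENNReal.toReal_add (measure_ne_top _ _) (measure_ne_top _ _)]
  rw [meas_Iic n hn θ q, meas_Iic n hn θ p] at h1
  linarith

lemma hvar_ne (n : ℕ) (hn : 1 ≤ n) : ((n : ℝ≥0))⁻¹ ≠ 0 := by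
  simp only [ne_eq, inv_eq_zero, Nat.cast_eq_zero]; omega

lemma meas_Ico (n : ℕ) (hn : 1 ≤ n) (θ : ℝ) {p q : ℝ} (h : p ≤ q) :
    ((gaussianReal θ ((n : ℝ≥0))⁻¹) (Ico p q)).toReal
      = stdNormCDF (Real.sqrt n * (q - θ)) - stdNormCDF (Real.sqrt n * (p - θ)) := by
  rw [measure_congr (Ico_ae_eq_Ioc' (gaussianReal_singleton θ (hvar_ne n hn) p)
    (gaussianReal_singleton θ (hvar_ne n hn) q))]
  exact meas_Ioc n hn θ h

lemma meas_Ioc₀ {p q : ℝ} (h : p ≤ q) :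
    ((gaussianReal 0 1) (Ioc p q)).toReal = stdNormCDF q - stdNormCDF p := by
  have := meas_Ioc 1 le_rfl 0 h
  simpa using this

lemma gaussian_map_neg (θ : ℝ) (v : ℝ≥0) :
    (gaussianReal θ v).map (fun y => -1 * y) = gaussianReal (-θ) v := by
  rw [gaussianReal_map_const_mul]
  have h2 : (NNReal.mk ((-1:ℝ)^2) (sq_nonneg _) : ℝ≥0) = 1 := by ext; norm_num
  rw [h2, one_mul, neg_one_mul]

lemma stdNormCDF_neg (x : ℝ) : stdNormCDF (-x) = 1 - stdNormCDF x := by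
  have h1 : (gaussianReal 0 1) (Iic (-x)) = (gaussianReal 0 1) (Ici x) := by
    have := gaussian_map_neg (0:ℝ) 1
    rw [neg_zero] at this
    conv_lhs => rw [← this]
    have hmble : Measurable fun y : ℝ => -1 * y := measurable_const_mul _
    rw [Measure.map_apply hmble measurableSet_Iic]
    congr 1
    ext y
    simp only [mem_preimage, mem_Iic, mem_Ici]
    constructor <;> intro <;> linarith
  have h2 : (gaussianReal 0 1) (Iio x) = (gaussianReal 0 1) (Iic x) :=
    measure_congr (Iio_ae_eq_Iic' (gaussianReal_singleton 0 one_ne_zero x))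
  have h3 : (gaussianReal 0 1) (Iio x) + (gaussianReal 0 1) (Ici x) = 1 := by
    rw [← measure_union (Iio_disjoint_Ici le_rfl) measurableSet_Ici, Iio_union_Ici,
      measure_univ]
  have h4 : (gaussianReal 0 1 (Iio x)).toReal + (gaussianReal 0 1 (Ici x)).toReal = 1 := by
    rw [← ENNReal.toReal_add (measure_ne_top _ _) (measure_ne_top _ _), h3, ENNReal.toReal_one]
  rw [stdNormCDF, h1, stdNormCDF]
  rw [h2] at h4
  linarith

lemma stdNormCDF_zero : stdNormCDF 0 = 1/2 := by
  have := stdNormCDF_neg 0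
  rw [neg_zero] at this
  linarith

lemma gaussianPDF_le_one (x : ℝ) : gaussianPDF 0 1 x ≤ 1 := by
  rw [gaussianPDF]
  refine ENNReal.ofReal_le_one.2 ?_
  rw [gaussianPDFReal]
  have h1 : (1:ℝ) ≤ Real.sqrt (2 * Real.pi * (1:ℝ≥0)) := by
    rw [Real.one_le_sqrt]
    · push_cast; nlinarith [Real.pi_gt_three]
  have h2 : Real.exp (-(x - 0)^2 / (2 * (1:ℝ≥0))) ≤ 1 := by
    rw [Real.exp_le_one_iff]
    push_cast
    nlinarith [sq_nonneg (x - 0)]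
  calc (Real.sqrt (2 * Real.pi * (1:ℝ≥0)))⁻¹ * Real.exp (-(x - 0)^2 / (2 * (1:ℝ≥0)))
      ≤ 1 * 1 := by
        apply mul_le_mul _ h2 (Real.exp_nonneg _) zero_le_one
        exact inv_le_one_of_one_le₀ h1
    _ = 1 := by norm_num

lemma stdNormCDF_lipschitz {u v : ℝ} (h : u ≤ v) : stdNormCDF v - stdNormCDF u ≤ v - u := by
  rw [← meas_Ioc₀ h]
  have hb : (gaussianReal 0 1) (Ioc u v) ≤ ENNReal.ofReal (v - u) := by
    rw [gaussianReal_apply _ one_ne_zero]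
    calc ∫⁻ x in Ioc u v, gaussianPDF 0 1 x
        ≤ ∫⁻ _ in Ioc u v, 1 := setLIntegral_mono measurable_const (fun x _ => gaussianPDF_le_one x)
      _ = volume (Ioc u v) := by simp
      _ = ENNReal.ofReal (v - u) := Real.volume_Ioc
  calc ((gaussianReal 0 1) (Ioc u v)).toReal ≤ (ENNReal.ofReal (v - u)).toReal :=
        ENNReal.toReal_mono ENNReal.ofReal_ne_top hb
    _ = v - u := ENNReal.toReal_ofReal (by linarith)

lemma shift_le {p q Δ : ℝ} (hpq : p ≤ q) (hΔ : 0 ≤ Δ) (h : -Δ ≤ 2*p) :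
    stdNormCDF (q + Δ) - stdNormCDF (p + Δ) ≤ stdNormCDF q - stdNormCDF p := by
  rw [← meas_Ioc₀ (by linarith : p + Δ ≤ q + Δ), ← meas_Ioc₀ hpq]
  refine ENNReal.toReal_mono (measure_ne_top _ _) ?_
  rw [gaussianReal_apply _ one_ne_zero, gaussianReal_apply _ one_ne_zero]
  have hmap : ∫⁻ x in Ioc (p+Δ) (q+Δ), gaussianPDF 0 1 x
      = ∫⁻ x in Ioc p q, gaussianPDF 0 1 (x + Δ) := by
    conv_lhs => rw [← map_add_right_eq_self volume Δ]
    rw [setLIntegral_map measurableSet_Ioc (measurable_gaussianPDF 0 1) (measurable_add_const Δ)]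
    have hpre : (fun x : ℝ => x + Δ) ⁻¹' Ioc (p+Δ) (q+Δ) = Ioc p q := by
      ext y
      simp only [mem_preimage, mem_Ioc]
      constructor <;> rintro ⟨h1, h2⟩ <;> constructor <;> linarith
    rw [hpre]
  rw [hmap]
  refine setLIntegral_mono (measurable_gaussianPDF 0 1) (fun x hx => ?_)
  rw [gaussianPDF, gaussianPDF]
  refine ENNReal.ofReal_le_ofReal ?_
  rw [gaussianPDFReal, gaussianPDFReal]
  refine mul_le_mul_of_nonneg_left (Real.exp_le_exp.2 ?_) (by positivity)
  have hx1 : p < x := hx.1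
  push_cast
  rw [div_le_div_iff_of_pos_right (by norm_num)]
  nlinarith [mul_nonneg hΔ (by linarith : (0:ℝ) ≤ 2*x + Δ)]

lemma key_comp {x y e : ℝ} (hx : 0 ≤ x) (hxy : x ≤ y) (he : 0 ≤ e) (hexy : e ≤ x + y) :
    stdNormCDF y - stdNormCDF (y - e) ≤ stdNormCDF x - stdNormCDF (x - e) := by
  rcases le_or_gt e x with hce | hce
  · have h := shift_le (p := x - e) (q := x) (Δ := y - x) (by linarith) (by linarith) (by linarith)
    rw [show x + (y - x) = y from by ring, show x - e + (y - x) = y - e from by ring] at h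
    exact h
  · rcases le_or_gt y e with hye | hye
    · have h := shift_le (p := e - y) (q := e - x) (Δ := x + y - e)
        (by linarith) (by linarith) (by linarith)
      rw [show e - x + (x + y - e) = y from by ring,
        show e - y + (x + y - e) = x from by ring] at h
      have n1 := stdNormCDF_neg (x - e)
      have n2 := stdNormCDF_neg (y - e)
      rw [show -(x - e) = e - x from by ring] at n1
      rw [show -(y - e) = e - y from by ring] at n2
      linarith
    · have hA := shift_le (p := 0) (q := e - x) (Δ := y - e) (by linarith) (by linarith)
        (by linarith)
      have hB := shift_le (p := 0) (q := x) (Δ := y - x) hx (by linarith) (by linarith)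
      rw [show e - x + (y - e) = y - x from by ring, show (0:ℝ) + (y - e) = y - e from by ring]
        at hA
      rw [show x + (y - x) = y from by ring, show (0:ℝ) + (y - x) = y - x from by ring] at hB
      have n1 := stdNormCDF_neg (x - e)
      rw [show -(x - e) = e - x from by ring] at n1
      have h0 := stdNormCDF_zero
      linarith

lemma hardThresh_measurable (η : ℝ) : Measurable (hardThresh η) := by
  unfold hardThresh
  exact Measurable.ite (measurableSet_lt measurable_const measurable_id.abs)
    measurable_id measurable_const

lemma coverSet_eq (est : ℝ → ℝ) (a b θ : ℝ) :
    {y : ℝ | est y - a ≤ θ ∧ θ ≤ est y + b} = est ⁻¹' (Icc (θ - b) (θ + a)) := by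
  ext y
  simp only [mem_setOf_eq, mem_preimage, mem_Icc]
  constructor <;> rintro ⟨h1, h2⟩ <;> exact ⟨by linarith, by linarith⟩

lemma coverSet_measurable (η a b θ : ℝ) :
    MeasurableSet {y : ℝ | hardThresh η y - a ≤ θ ∧ θ ≤ hardThresh η y + b} := by
  rw [coverSet_eq]
  exact (hardThresh_measurable η) measurableSet_Icc

lemma hardThresh_neg (η y : ℝ) : hardThresh η (-y) = - hardThresh η y := by
  unfold hardThresh
  rw [abs_neg]
  split <;> simp

lemma cover_symm (n : ℕ) (η a b θ : ℝ) :
    cover n (hardThresh η) a b θ = cover n (hardThresh η) b a (-θ) := by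
  unfold cover
  have hmap : (gaussianReal (-θ) ((n:ℝ≥0))⁻¹).map (fun y => -1 * y)
      = gaussianReal θ ((n:ℝ≥0))⁻¹ := by
    rw [gaussian_map_neg, neg_neg]
  congr 1
  conv_lhs => rw [← hmap]
  have hmble : Measurable fun y : ℝ => -1 * y := measurable_const_mul _
  rw [Measure.map_apply hmble (coverSet_measurable η a b θ)]
  congr 1
  ext y
  simp only [mem_preimage, mem_setOf_eq, neg_one_mul, hardThresh_neg]
  constructor <;> rintro ⟨h1, h2⟩ <;> exact ⟨by linarith, by linarith⟩

lemma cover_nonneg (n : ℕ) (est : ℝ → ℝ) (a b θ : ℝ) : 0 ≤ cover n est a b θ :=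
  ENNReal.toReal_nonneg

lemma cover_bdd (n : ℕ) (est : ℝ → ℝ) (a b : ℝ) :
    BddBelow (Set.range fun θ => cover n est a b θ) := by
  refine ⟨0, ?_⟩
  rintro x ⟨θ, rfl⟩
  exact cover_nonneg n est a b θ

lemma iInf_neg_reindex (f : ℝ → ℝ) : (⨅ θ : ℝ, f (-θ)) = ⨅ θ : ℝ, f θ := by
  have h : Set.range (fun θ : ℝ => f (-θ)) = Set.range f := by
    ext x
    constructor
    · rintro ⟨θ, rfl⟩; exact ⟨-θ, rfl⟩
    · rintro ⟨θ, rfl⟩; exact ⟨-θ, by simp⟩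
  rw [iInf, iInf, h]

lemma main_case (n : ℕ) (hn : 1 ≤ n) (η a b : ℝ) (hη : 0 < η) (ha : 0 ≤ a) (hb : 0 ≤ b)
    (hab : η ≤ a + b) (hle : a ≤ b) :
    (⨅ θ : ℝ, cover n (hardThresh η) a b θ) =
      stdNormCDF (Real.sqrt n * (a - η)) - stdNormCDF (-(Real.sqrt n * b)) := by
  have hs : (0:ℝ) < Real.sqrt n := Real.sqrt_pos.2 (by exact_mod_cast Nat.pos_of_ne_zero (by omega))
  apply le_antisymm
  · -- inf ≤ c, via θ_k = -a - η/(k+2) → -a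
    set s := Real.sqrt n with hsdef
    have hk : ∀ k : ℕ, (⨅ θ : ℝ, cover n (hardThresh η) a b θ)
        ≤ stdNormCDF (s * (a - η + η/((k:ℝ)+2))) - stdNormCDF (-(s*b)) := by
      intro k
      set t : ℝ := η/((k:ℝ)+2) with htdef
      have ht0 : 0 < t := by positivity
      have htη : t < η := by
        rw [htdef, div_lt_iff₀ (by positivity)]
        nlinarith
      set θ : ℝ := -a - t with hθdef
      have hset : {y : ℝ | hardThresh η y - a ≤ θ ∧ θ ≤ hardThresh η y + b}
          = Ico (θ - b) (-η) := by
        ext y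
        simp only [mem_setOf_eq, mem_Ico, hardThresh]
        split_ifs with hy
        · constructor
          · rintro ⟨h1, h2⟩
            have hy0 : y < 0 := by
              have : y ≤ θ + a := by linarith
              rw [hθdef] at this
              linarith
            rw [abs_of_neg hy0] at hy
            exact ⟨by linarith, by linarith⟩
          · rintro ⟨h1, h2⟩
            constructor
            · rw [hθdef]; linarith
            · linarith
        · constructor
          · rintro ⟨h1, h2⟩
            exfalso
            rw [hθdef] at h1
            linarith
          · rintro ⟨h1, h2⟩
            exfalso
            have := neg_abs_le y
            push_neg at hy
            linarith
        -- end hset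
      have hcov : cover n (hardThresh η) a b θ
          = stdNormCDF (s * (a - η + t)) - stdNormCDF (-(s*b)) := by
        unfold cover
        rw [hset, meas_Ico n hn θ (by rw [hθdef]; linarith)]
        rw [show -η - θ = a - η + t from by rw [hθdef]; ring,
          show θ - b - θ = -b from by ring, show s * -b = -(s*b) from by ring]
      calc (⨅ θ : ℝ, cover n (hardThresh η) a b θ) ≤ cover n (hardThresh η) a b θ :=
            ciInf_le (cover_bdd n _ a b) θ
        _ = _ := hcov
    -- limit
    have ht0 : Tendsto (fun k : ℕ => η/((k:ℝ)+2)) atTop (𝓝 0) := by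
      refine Tendsto.div_atTop tendsto_const_nhds ?_
      exact tendsto_atTop_add_const_right _ 2 tendsto_natCast_atTop_atTop
    have hΦto : Tendsto (fun k : ℕ => stdNormCDF (s * (a - η + η/((k:ℝ)+2)))) atTop
        (𝓝 (stdNormCDF (s * (a - η)))) := by
      have hlow : ∀ k : ℕ, stdNormCDF (s * (a - η))
          ≤ stdNormCDF (s * (a - η + η/((k:ℝ)+2))) := by
        intro k
        refine stdNormCDF_mono (mul_le_mul_of_nonneg_left ?_ hs.le)
        have : (0:ℝ) < η/((k:ℝ)+2) := by positivity
        linarith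
      have hup : ∀ k : ℕ, stdNormCDF (s * (a - η + η/((k:ℝ)+2)))
          ≤ stdNormCDF (s * (a - η)) + s * (η/((k:ℝ)+2)) := by
        intro k
        have h1 : s * (a - η) ≤ s * (a - η + η/((k:ℝ)+2)) := by
          refine mul_le_mul_of_nonneg_left ?_ hs.le
          have : (0:ℝ) < η/((k:ℝ)+2) := by positivity
          linarith
        have := stdNormCDF_lipschitz h1
        nlinarith [this]
      have hupto : Tendsto (fun k : ℕ => stdNormCDF (s * (a - η)) + s * (η/((k:ℝ)+2)))
          atTop (𝓝 (stdNormCDF (s * (a - η)))) := by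
        have h2 : Tendsto (fun k : ℕ => s * (η/((k:ℝ)+2))) atTop (𝓝 0) := by
          simpa using ht0.const_mul s
        have h3 : Tendsto (fun _ : ℕ => stdNormCDF (s * (a - η))) atTop
            (𝓝 (stdNormCDF (s * (a - η)))) := tendsto_const_nhds
        simpa using h3.add h2
      exact tendsto_of_tendsto_of_tendsto_of_le_of_le tendsto_const_nhds hupto hlow hup
    have hgto : Tendsto (fun k : ℕ => stdNormCDF (s * (a - η + η/((k:ℝ)+2)))
        - stdNormCDF (-(s*b))) atTop (𝓝 (stdNormCDF (s * (a - η)) - stdNormCDF (-(s*b)))) :=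
      hΦto.sub_const _
    exact ge_of_tendsto hgto (Filter.Eventually.of_forall hk)
  · -- c ≤ inf
    refine le_ciInf fun θ => ?_
    set s := Real.sqrt n with hsdef
    rcases lt_or_ge θ (-a) with hθ | hθ
    · -- left region
      set u : ℝ := min (θ + a) (-η) with hudef
      have hsub : Ico (θ - b) u ⊆
          {y : ℝ | hardThresh η y - a ≤ θ ∧ θ ≤ hardThresh η y + b} := by
        rintro y ⟨h1, h2⟩
        have hyη : y < -η := lt_of_lt_of_le h2 (min_le_right _ _)
        have hya : y ≤ θ + a := le_of_lt (lt_of_lt_of_le h2 (min_le_left _ _))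
        have hth : hardThresh η y = y := by
          unfold hardThresh
          rw [if_pos]
          rw [abs_of_neg (by linarith : y < 0)]
          linarith
        simp only [mem_setOf_eq, hth]
        exact ⟨by linarith, by linarith⟩
      have hlu : θ - b ≤ u := le_min (by linarith) (by linarith)
      have hbound : ((gaussianReal θ ((n : ℝ≥0))⁻¹) (Ico (θ - b) u)).toReal
          ≤ cover n (hardThresh η) a b θ :=
        ENNReal.toReal_mono (measure_ne_top _ _) (measure_mono hsub)
      rw [meas_Ico n hn θ hlu] at hbound
      have hcover := hbound
      have h1 : stdNormCDF (s * (a - η)) ≤ stdNormCDF (s * (u - θ)) := by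
        refine stdNormCDF_mono (mul_le_mul_of_nonneg_left ?_ hs.le)
        have : θ + (a - η) ≤ u := le_min (by linarith) (by linarith)
        linarith
      rw [show θ - b - θ = -b from by ring, show s * -b = -(s*b) from by ring] at hcover
      linarith
    · rcases le_or_gt θ b with hθb | hθb
      · -- middle region
        have hsub : Ioc (θ - b) (θ + a) ⊆
            {y : ℝ | hardThresh η y - a ≤ θ ∧ θ ≤ hardThresh η y + b} := by
          rintro y ⟨h1, h2⟩
          simp only [mem_setOf_eq, hardThresh]
          split_ifs with hy
          · exact ⟨by linarith, by linarith⟩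
          · exact ⟨by linarith, by linarith⟩
        have hbound : ((gaussianReal θ ((n : ℝ≥0))⁻¹) (Ioc (θ - b) (θ + a))).toReal
            ≤ cover n (hardThresh η) a b θ :=
          ENNReal.toReal_mono (measure_ne_top _ _) (measure_mono hsub)
        rw [meas_Ioc n hn θ (by linarith : θ - b ≤ θ + a)] at hbound
        rw [show θ + a - θ = a from by ring, show θ - b - θ = -b from by ring,
          show s * -b = -(s*b) from by ring] at hbound
        have h1 : stdNormCDF (s * (a - η)) ≤ stdNormCDF (s * a) :=
          stdNormCDF_mono (mul_le_mul_of_nonneg_left (by linarith) hs.le)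
        linarith
      · -- right region
        set L : ℝ := max η (θ - b) with hLdef
        have hsub : Ioc L (θ + a) ⊆
            {y : ℝ | hardThresh η y - a ≤ θ ∧ θ ≤ hardThresh η y + b} := by
          rintro y ⟨h1, h2⟩
          have hyη : η < y := lt_of_le_of_lt (le_max_left _ _) h1
          have hyb : θ - b < y := lt_of_le_of_lt (le_max_right _ _) h1
          have hth : hardThresh η y = y := by
            unfold hardThresh
            rw [if_pos]
            rw [abs_of_pos (by linarith : 0 < y)]
            exact hyη
          simp only [mem_setOf_eq, hth]
          exact ⟨by linarith, by linarith⟩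
        have hLu : L ≤ θ + a := max_le (by linarith) (by linarith)
        have hbound : ((gaussianReal θ ((n : ℝ≥0))⁻¹) (Ioc L (θ + a))).toReal
            ≤ cover n (hardThresh η) a b θ :=
          ENNReal.toReal_mono (measure_ne_top _ _) (measure_mono hsub)
        rw [meas_Ioc n hn θ hLu] at hbound
        rw [show θ + a - θ = a from by ring] at hbound
        have h1 : stdNormCDF (s * (L - θ)) ≤ stdNormCDF (s * (η - b)) := by
          refine stdNormCDF_mono (mul_le_mul_of_nonneg_left ?_ hs.le)
          have : L ≤ θ + η - b := max_le (by linarith) (by linarith)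
          linarith
        have kc := key_comp (x := s*a) (y := s*b) (e := s*η)
          (by positivity) (mul_le_mul_of_nonneg_left hle hs.le) (by positivity)
          (by nlinarith)
        have n1 := stdNormCDF_neg (s*b)
        have n2 : stdNormCDF (s * (η - b)) = 1 - stdNormCDF (s*b - s*η) := by
          rw [show s * (η - b) = -(s*b - s*η) from by ring]
          exact stdNormCDF_neg _
        rw [show s * (a - η) = s*a - s*η from by ring]
        linarith

/-- Proposition 2 (hard-thresholding): the infimal coverage probability of
`C_{H,n} = [θ̂_H - a, θ̂_H + b]`. -/
theorem stmt_2 (n : ℕ) (hn : 1 ≤ n) (η a b : ℝ) (hη : 0 < η) (ha : 0 ≤ a) (hb : 0 ≤ b) :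
    (η ≤ a + b → a ≤ b →
      (⨅ θ : ℝ, cover n (hardThresh η) a b θ) =
        stdNormCDF (Real.sqrt n * (a - η)) - stdNormCDF (-(Real.sqrt n * b))) ∧
    (η ≤ a + b → b < a →
      (⨅ θ : ℝ, cover n (hardThresh η) a b θ) =
        stdNormCDF (Real.sqrt n * (b - η)) - stdNormCDF (-(Real.sqrt n * a))) ∧
    (a + b < η →
      (⨅ θ : ℝ, cover n (hardThresh η) a b θ) = 0) := by
  refine ⟨fun hab hle => main_case n hn η a b hη ha hb hab hle, fun hab hlt => ?_, fun hlt => ?_⟩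
  · have hsym : (⨅ θ : ℝ, cover n (hardThresh η) a b θ)
        = ⨅ θ : ℝ, cover n (hardThresh η) b a θ := by
      have h1 : ∀ θ : ℝ, cover n (hardThresh η) a b θ = cover n (hardThresh η) b a (-θ) :=
        cover_symm n η a b
      calc (⨅ θ : ℝ, cover n (hardThresh η) a b θ)
          = ⨅ θ : ℝ, cover n (hardThresh η) b a (-θ) := by simp_rw [h1]
        _ = _ := iInf_neg_reindex _
    rw [hsym]
    exact main_case n hn η b a hη hb ha (by linarith) (le_of_lt hlt)
  · have h0 : cover n (hardThresh η) a b (η - a) = 0 := by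
      unfold cover
      have hempty : {y : ℝ | hardThresh η y - a ≤ η - a ∧ η - a ≤ hardThresh η y + b}
          = (∅ : Set ℝ) := by
        ext y
        simp only [mem_setOf_eq, mem_empty_iff_false, iff_false]
        rintro ⟨h1, h2⟩
        unfold hardThresh at h1 h2
        split_ifs at h1 h2 with hy
        · have hy0 : 0 < y := by linarith
          rw [abs_of_pos hy0] at hy
          linarith
        · linarith
      rw [hempty]
      simp
    apply le_antisymm
    · exact (ciInf_le (cover_bdd n _ a b) (η - a)).trans (le_of_eq h0)
    · exact le_ciInf fun θ => cover_nonneg n _ a b θ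
end

section
/- For every n ≥ 1, every tuning parameter η_n > 0, every nonnegative real number c_n, and each estimator θ̂ that is one of θ̂_S, θ̂_H, θ̂_A, the one-sided intervals (−∞, θ̂ + c_n] and [θ̂ − c_n, ∞) both have infimal coverage probability inf_{θ∈ℝ} P_{n,θ}(θ belongs to the interval) equal to Φ(n^{1/2}(c_n − η_n)). -/
open MeasureTheory ProbabilityTheory Filter
open scoped NNReal Topology

lemma std_Ici (t : ℝ) : (gaussianReal 0 1) (Set.Ici t) = (gaussianReal 0 1) (Set.Iic (-t)) := by
  have hmap : (gaussianReal 0 1).map (fun x : ℝ => (-1 : ℝ) * x) = gaussianReal 0 1 := by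
    rw [show (fun x : ℝ => (-1 : ℝ) * x) = ((-1 : ℝ) * ·) from rfl,
      gaussianReal_map_const_mul (-1 : ℝ)]
    norm_num
  calc (gaussianReal 0 1) (Set.Ici t)
      = ((gaussianReal 0 1).map (fun x : ℝ => (-1 : ℝ) * x)) (Set.Ici t) := by rw [hmap]
    _ = (gaussianReal 0 1) ((fun x : ℝ => (-1 : ℝ) * x) ⁻¹' Set.Ici t) := by
        rw [Measure.map_apply (by fun_prop) measurableSet_Ici]
    _ = (gaussianReal 0 1) (Set.Iic (-t)) := by
        congr 1; ext x; simp only [Set.mem_preimage, Set.mem_Ici, Set.mem_Iic]; constructor <;> intro h <;> linarith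

lemma gauss_decomp (n : ℕ) (hn : 1 ≤ n) (θ : ℝ) :
    gaussianReal θ ((n : ℝ≥0))⁻¹ =
      (gaussianReal 0 1).map (fun x : ℝ => (Real.sqrt n)⁻¹ * x + θ) := by
  have hnpos : (0 : ℝ) < n := by exact_mod_cast hn
  have hs : (0:ℝ) < Real.sqrt n := Real.sqrt_pos.mpr hnpos
  have h1 : (gaussianReal 0 1).map (((Real.sqrt n)⁻¹ : ℝ) * ·)
      = gaussianReal 0 ((n : ℝ≥0))⁻¹ := by
    rw [gaussianReal_map_const_mul]
    congr 1
    · ring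
    · ext
      push_cast
      rw [mul_one, inv_pow, Real.sq_sqrt hnpos.le]
  have h2 : (gaussianReal 0 ((n : ℝ≥0))⁻¹).map (· + θ) = gaussianReal θ ((n : ℝ≥0))⁻¹ := by
    rw [gaussianReal_map_add_const]; congr 1; ring
  rw [← h2, ← h1, Measure.map_map (by fun_prop) (by fun_prop)]
  rfl

lemma gauss_Ici (n : ℕ) (hn : 1 ≤ n) (θ a : ℝ) :
    ((gaussianReal θ ((n : ℝ≥0))⁻¹) (Set.Ici a)).toReal
      = stdNormCDF (Real.sqrt n * (θ - a)) := by
  have hnpos : (0 : ℝ) < n := by exact_mod_cast hn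
  have hs : (0:ℝ) < Real.sqrt n := Real.sqrt_pos.mpr hnpos
  rw [gauss_decomp n hn θ, Measure.map_apply (by fun_prop) measurableSet_Ici]
  have hpre : (fun x : ℝ => (Real.sqrt n)⁻¹ * x + θ) ⁻¹' Set.Ici a
      = Set.Ici (Real.sqrt n * (a - θ)) := by
    ext x
    simp only [Set.mem_preimage, Set.mem_Ici]
    have hx : Real.sqrt n * ((Real.sqrt n)⁻¹ * x) = x := by field_simp
    have hx' : (Real.sqrt n)⁻¹ * (Real.sqrt n * (a - θ)) = a - θ := by field_simp
    rw [← sub_nonneg, ← sub_nonneg (a := x)]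
    constructor <;> intro h
    · nlinarith [mul_nonneg hs.le h, hx]
    · nlinarith [mul_nonneg (inv_pos.mpr hs).le h, hx']
  rw [hpre, std_Ici, stdNormCDF]
  ring_nf

lemma gauss_noAtoms (n : ℕ) (hn : 1 ≤ n) (θ : ℝ) :
    ∀ a : ℝ, (gaussianReal θ ((n : ℝ≥0))⁻¹) {a} = 0 := by
  intro a
  have hv : ((n : ℝ≥0))⁻¹ ≠ 0 := by
    simp only [ne_eq, inv_eq_zero, Nat.cast_eq_zero]
    omega
  exact (gaussianReal_absolutelyContinuous θ hv) (Real.volume_singleton)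

lemma gauss_Ioi (n : ℕ) (hn : 1 ≤ n) (θ a : ℝ) :
    ((gaussianReal θ ((n : ℝ≥0))⁻¹) (Set.Ioi a)).toReal
      = stdNormCDF (Real.sqrt n * (θ - a)) := by
  rw [← gauss_Ici n hn θ a]
  congr 1
  have : Set.Ici a = Set.Ioi a ∪ {a} := by
    ext x; simp only [Set.mem_Ici, Set.mem_union, Set.mem_Ioi, Set.mem_singleton_iff]
    constructor
    · intro h; rcases lt_or_eq_of_le h with h | h
      · exact Or.inl h
      · exact Or.inr h.symm
    · rintro (h | rfl)
      · exact le_of_lt h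
      · exact le_refl _
  rw [this]
  refine le_antisymm (measure_mono Set.subset_union_left) ?_
  calc (gaussianReal θ ((n : ℝ≥0))⁻¹) (Set.Ioi a ∪ {a})
      ≤ (gaussianReal θ ((n : ℝ≥0))⁻¹) (Set.Ioi a) + (gaussianReal θ ((n : ℝ≥0))⁻¹) {a} :=
        measure_union_le _ _
    _ = (gaussianReal θ ((n : ℝ≥0))⁻¹) (Set.Ioi a) := by rw [gauss_noAtoms n hn θ a, add_zero]

lemma continuous_stdNormCDF : Continuous stdNormCDF := by
  have hrepr : stdNormCDF = fun x => ∫ t in Set.Iic x, gaussianPDFReal 0 1 t := by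
    funext x
    rw [stdNormCDF, gaussianReal_apply_eq_integral 0 one_ne_zero,
      ENNReal.toReal_ofReal (setIntegral_nonneg measurableSet_Iic
        (fun t _ => gaussianPDFReal_nonneg 0 1 t))]
  rw [hrepr]
  have hint : Integrable (gaussianPDFReal 0 1) := integrable_gaussianPDFReal 0 1
  have key : ∀ x : ℝ, ∫ t in Set.Iic x, gaussianPDFReal 0 1 t
      = (∫ t in Set.Iic 0, gaussianPDFReal 0 1 t) + ∫ t in (0:ℝ)..x, gaussianPDFReal 0 1 t := by
    intro x
    rw [← intervalIntegral.integral_Iic_sub_Iic (hint.integrableOn) (hint.integrableOn)]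
    ring
  rw [show (fun x => ∫ t in Set.Iic x, gaussianPDFReal 0 1 t) = fun x =>
      (∫ t in Set.Iic 0, gaussianPDFReal 0 1 t) + ∫ t in (0:ℝ)..x, gaussianPDFReal 0 1 t
    from funext key]
  exact continuous_const.add (intervalIntegral.continuous_primitive
    (fun a b => hint.intervalIntegrable) 0)


lemma soft_ge {η : ℝ} (hη : 0 < η) (y : ℝ) : y - η ≤ softThresh η y := by
  unfold softThresh
  rcases lt_trichotomy y 0 with h | rfl | h
  · rw [Real.sign_of_neg h, abs_of_neg h]
    have : max (-y - η) 0 ≤ η - y := max_le (by linarith) (by linarith)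
    nlinarith
  · simp [Real.sign_zero]; linarith
  · rw [Real.sign_of_pos h, abs_of_pos h, one_mul]
    exact le_max_left _ _

lemma hard_ge {η : ℝ} (hη : 0 < η) (y : ℝ) : y - η ≤ hardThresh η y := by
  unfold hardThresh
  split_ifs with h
  · linarith
  · push_neg at h
    have := le_abs_self y
    linarith

lemma ada_ge {η : ℝ} (hη : 0 < η) (y : ℝ) : y - η ≤ adaLasso η y := by
  unfold adaLasso
  split_ifs with h
  · have := le_abs_self y
    linarith
  · push_neg at h
    have hy0 : y ≠ 0 := by
      intro h0; rw [h0] at h; simp at h; linarith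
    have : η ^ 2 / y ≤ η := by
      rcases lt_trichotomy y 0 with hy | hy | hy
      · have : η ^ 2 / y < 0 := div_neg_of_pos_of_neg (by positivity) hy
        linarith
      · exact absurd hy hy0
      · rw [div_le_iff₀ hy]
        have hyη : η < y := by rwa [abs_of_pos hy] at h
        nlinarith
    linarith

lemma soft_odd (η y : ℝ) : softThresh η (-y) = -softThresh η y := by
  unfold softThresh; rw [Real.sign_neg, abs_neg]; ring

lemma hard_odd (η y : ℝ) : hardThresh η (-y) = -hardThresh η y := by
  unfold hardThresh; rw [abs_neg]; split_ifs <;> ring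

lemma ada_odd (η y : ℝ) : adaLasso η (-y) = -adaLasso η y := by
  unfold adaLasso; rw [abs_neg]; split_ifs with h
  · ring
  · rw [div_neg, neg_sub', sub_neg_eq_add]

lemma soft_set {η c θ : ℝ} (hη : 0 < η) (hθ : c < θ) :
    {y : ℝ | θ ≤ softThresh η y + c} = Set.Ici (θ - c + η) := by
  have ht : 0 < θ - c := by linarith
  ext y
  simp only [Set.mem_setOf_eq, Set.mem_Ici]
  constructor
  · intro h
    have hpos : 0 < softThresh η y := by linarith
    have hy0 : 0 < y := by
      by_contra hy
      push_neg at hy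
      rcases lt_or_eq_of_le hy with hy | hy
      · rw [softThresh, Real.sign_of_neg hy] at hpos
        nlinarith [le_max_right (|y| - η) 0]
      · rw [hy, softThresh, Real.sign_zero, zero_mul] at hpos; linarith
    rw [softThresh, Real.sign_of_pos hy0, abs_of_pos hy0, one_mul] at h
    rcases max_cases (y - η) 0 with ⟨he, _⟩ | ⟨he, _⟩ <;> rw [he] at h <;> linarith
  · intro h
    have hy0 : 0 < y := by linarith
    rw [softThresh, Real.sign_of_pos hy0, abs_of_pos hy0, one_mul,
      max_eq_left (by linarith)]
    linarith

lemma hard_set {η c θ : ℝ} (hη : 0 < η) (hθ1 : c < θ) (hθ2 : θ ≤ c + η) :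
    {y : ℝ | θ ≤ hardThresh η y + c} = Set.Ioi η := by
  ext y
  simp only [Set.mem_setOf_eq, Set.mem_Ioi]
  unfold hardThresh
  split_ifs with h
  · constructor
    · intro hyc
      have hy0 : 0 < y := by linarith
      rwa [abs_of_pos hy0] at h
    · intro hy; linarith
  · push_neg at h
    constructor
    · intro hyc; linarith
    · intro hy
      have := le_abs_self y
      linarith

lemma ada_set {η c θ : ℝ} (hη : 0 < η) (hθ : c < θ) :
    {y : ℝ | θ ≤ adaLasso η y + c}
      = Set.Ici ((θ - c + Real.sqrt ((θ - c) ^ 2 + 4 * η ^ 2)) / 2) := by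
  set t := θ - c with htdef
  have ht : 0 < t := by simp [htdef]; linarith
  set s := Real.sqrt (t ^ 2 + 4 * η ^ 2) with hsdef
  have hs0 : 0 ≤ s := Real.sqrt_nonneg _
  have hs2 : s ^ 2 = t ^ 2 + 4 * η ^ 2 := Real.sq_sqrt (by positivity)
  have hgη : η < (t + s) / 2 := by nlinarith
  ext y
  simp only [Set.mem_setOf_eq, Set.mem_Ici]
  unfold adaLasso
  constructor
  · intro h
    split_ifs at h with habs
    · linarith
    · push_neg at habs
      have hy0 : y ≠ 0 := by intro h0; rw [h0] at habs; simp at habs; linarith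
      have hypos : 0 < y := by
        by_contra hy
        push_neg at hy
        have hyneg : y < 0 := lt_of_le_of_ne hy hy0
        have : y - η ^ 2 / y < 0 := by
          rw [sub_neg, lt_div_iff_of_neg hyneg]
          rw [abs_of_neg hyneg] at habs
          nlinarith
        linarith
      have hkey : y ^ 2 - t * y - η ^ 2 ≥ 0 := by
        have h2 : t ≤ y - η ^ 2 / y := by linarith
        have := (le_sub_comm).mp h2
        rw [div_le_iff₀ hypos] at this
        nlinarith
      have h2yt : 0 < 2 * y - t := by nlinarith
      nlinarith [sq_nonneg (2 * y - t - s), sq_nonneg (2 * y - t + s)]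
  · intro h
    have hyη : η < y := lt_of_lt_of_le hgη h
    have hypos : 0 < y := lt_trans hη hyη
    rw [if_neg (by rw [abs_of_pos hypos]; linarith)]
    have hkey : y ^ 2 - t * y - η ^ 2 ≥ 0 := by nlinarith
    have : η ^ 2 / y ≤ y - t := by
      rw [div_le_iff₀ hypos]; nlinarith
    linarith

lemma gauss_map_neg (n : ℕ) (θ : ℝ) :
    (gaussianReal θ ((n : ℝ≥0))⁻¹).map (fun x : ℝ => -x) = gaussianReal (-θ) ((n : ℝ≥0))⁻¹ := by
  have : (fun x : ℝ => -x) = ((-1 : ℝ) * ·) := by funext x; ring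
  rw [this, gaussianReal_map_const_mul]
  congr 1
  · ring
  · ext; norm_num

/-- Remark (iv): the one-sided intervals `(-∞, θ̂ + c]` and `[θ̂ - c, ∞)` based on any of
the soft-thresholding, hard-thresholding, or adaptive LASSO estimators have infimal
coverage probability `Φ(√n (c - η))`. -/
theorem stmt_5 (n : ℕ) (hn : 1 ≤ n) (η c : ℝ) (hη : 0 < η) (hc : 0 ≤ c)
    (est : ℝ → ℝ)
    (hest : est = softThresh η ∨ est = hardThresh η ∨ est = adaLasso η) :
    (⨅ θ : ℝ, ((gaussianReal θ ((n : ℝ≥0))⁻¹) {y : ℝ | θ ≤ est y + c}).toReal) =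
      stdNormCDF (Real.sqrt n * (c - η)) ∧
    (⨅ θ : ℝ, ((gaussianReal θ ((n : ℝ≥0))⁻¹) {y : ℝ | est y - c ≤ θ}).toReal) =
      stdNormCDF (Real.sqrt n * (c - η)) := by
  have hnpos : (0 : ℝ) < n := by exact_mod_cast hn
  have hsn : (0 : ℝ) < Real.sqrt n := Real.sqrt_pos.mpr hnpos
  set L := stdNormCDF (Real.sqrt n * (c - η)) with hL
  set F : ℝ → ℝ :=
    fun θ => ((gaussianReal θ ((n : ℝ≥0))⁻¹) {y : ℝ | θ ≤ est y + c}).toReal with hF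
  have hge : ∀ y, y - η ≤ est y := by
    rcases hest with rfl | rfl | rfl
    exacts [soft_ge hη, hard_ge hη, ada_ge hη]
  have hodd : ∀ y, est (-y) = -est y := by
    rcases hest with rfl | rfl | rfl
    exacts [soft_odd η, hard_odd η, ada_odd η]
  -- lower bound
  have hlb : ∀ θ, L ≤ F θ := by
    intro θ
    have hsub : Set.Ici (θ - c + η) ⊆ {y : ℝ | θ ≤ est y + c} := by
      intro y hy
      have h1 := hge y
      have h2 := Set.mem_Ici.mp hy
      simp only [Set.mem_setOf_eq]
      linarith
    have hmono := measure_mono (μ := gaussianReal θ ((n : ℝ≥0))⁻¹) hsub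
    have heq : ((gaussianReal θ ((n : ℝ≥0))⁻¹) (Set.Ici (θ - c + η))).toReal = L := by
      rw [gauss_Ici n hn, hL]
      congr 1
      ring
    rw [hF, ← heq]
    exact ENNReal.toReal_mono (measure_ne_top _ _) hmono
  have hbdd : BddBelow (Set.range F) := ⟨L, by rintro x ⟨θ, rfl⟩; exact hlb θ⟩
  -- upper bound
  have hub : (⨅ θ : ℝ, F θ) ≤ L := by
    rcases hest with rfl | rfl | rfl
    · -- soft
      have hFc : F (c + 1) = L := by
        rw [hF]
        simp only
        rw [soft_set hη (by linarith : c < c + 1), gauss_Ici n hn, hL]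
        congr 1
        ring
      exact hFc ▸ ciInf_le hbdd (c + 1)
    · -- hard
      have hθk : ∀ k : ℕ, F (c + η / (k + 1))
          = stdNormCDF (Real.sqrt n * (c + η / ((k : ℝ) + 1) - η)) := by
        intro k
        have hk1 : (0 : ℝ) < (k : ℝ) + 1 := by positivity
        have hd : 0 < η / ((k : ℝ) + 1) := by positivity
        have h1 : c < c + η / ((k : ℝ) + 1) := by linarith
        have h2 : c + η / ((k : ℝ) + 1) ≤ c + η := by
          have : η / ((k : ℝ) + 1) ≤ η := div_le_self hη.le (by linarith)
          linarith
        rw [hF]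
        simp only
        rw [hard_set hη h1 h2, gauss_Ioi n hn]
      have h0 : Tendsto (fun k : ℕ => c + η / ((k : ℝ) + 1)) atTop (𝓝 c) := by
        have h' : Tendsto (fun k : ℕ => η * (1 / ((k : ℝ) + 1))) atTop (𝓝 (η * 0)) :=
          tendsto_one_div_add_atTop_nhds_zero_nat.const_mul η
        have hcc : Tendsto (fun _ : ℕ => c) atTop (𝓝 c) := tendsto_const_nhds
        simpa [mul_one_div, div_eq_mul_inv] using hcc.add h'
      have hcont : Continuous fun θ : ℝ => stdNormCDF (Real.sqrt n * (θ - η)) :=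
        continuous_stdNormCDF.comp (by continuity)
      have htend : Tendsto (fun k : ℕ => F (c + η / (k + 1))) atTop (𝓝 L) := by
        rw [show (fun k : ℕ => F (c + η / (k + 1)))
            = fun k : ℕ => stdNormCDF (Real.sqrt n * (c + η / ((k : ℝ) + 1) - η))
          from funext hθk]
        exact (hcont.tendsto c).comp h0
      exact ge_of_tendsto htend (Eventually.of_forall fun k => ciInf_le hbdd _)
    · -- adaptive lasso
      set f : ℝ → ℝ := fun θ => stdNormCDF (Real.sqrt n *
          (θ - (θ - c + Real.sqrt ((θ - c) ^ 2 + 4 * η ^ 2)) / 2)) with hf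
      have hθk : ∀ k : ℕ, F (c + η / (k + 1)) = f (c + η / (k + 1)) := by
        intro k
        have hk1 : (0 : ℝ) < (k : ℝ) + 1 := by positivity
        have hd : 0 < η / ((k : ℝ) + 1) := by positivity
        have h1 : c < c + η / ((k : ℝ) + 1) := by linarith
        rw [hF, hf]
        simp only
        rw [ada_set hη h1, gauss_Ici n hn]
      have hfc : f c = L := by
        rw [hf, hL]
        simp only
        congr 1
        rw [show (c - c) ^ 2 + 4 * η ^ 2 = (2 * η) ^ 2 by ring,
          Real.sqrt_sq (by linarith)]
        ring
      have h0 : Tendsto (fun k : ℕ => c + η / ((k : ℝ) + 1)) atTop (𝓝 c) := by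
        have h' : Tendsto (fun k : ℕ => η * (1 / ((k : ℝ) + 1))) atTop (𝓝 (η * 0)) :=
          tendsto_one_div_add_atTop_nhds_zero_nat.const_mul η
        have hcc : Tendsto (fun _ : ℕ => c) atTop (𝓝 c) := tendsto_const_nhds
        simpa [mul_one_div, div_eq_mul_inv] using hcc.add h'
      have hcont : Continuous f := by
        rw [hf]
        apply continuous_stdNormCDF.comp
        fun_prop
      have htend : Tendsto (fun k : ℕ => F (c + η / (k + 1))) atTop (𝓝 L) := by
        rw [show (fun k : ℕ => F (c + η / (k + 1)))
            = fun k : ℕ => f (c + η / ((k : ℝ) + 1)) from funext hθk, ← hfc]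
        exact (hcont.tendsto c).comp h0
      exact ge_of_tendsto htend (Eventually.of_forall fun k => ciInf_le hbdd _)
  have hfirst : (⨅ θ : ℝ, F θ) = L := le_antisymm hub (le_ciInf hlb)
  refine ⟨hfirst, ?_⟩
  -- second component via symmetry
  have hGF : ∀ θ : ℝ, ((gaussianReal θ ((n : ℝ≥0))⁻¹) {y : ℝ | est y - c ≤ θ}).toReal
      = F (-θ) := by
    intro θ
    have hset : {y : ℝ | est y - c ≤ θ}
        = (fun y : ℝ => -y) ⁻¹' {y : ℝ | -θ ≤ est y + c} := by
      ext y
      simp only [Set.mem_setOf_eq, Set.mem_preimage, hodd y]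
      constructor <;> intro h <;> linarith
    rw [hF]
    simp only
    rw [hset, ← measurableEmbedding_neg.map_apply, gauss_map_neg]
  simp only [hGF]
  have hrange : Set.range (fun θ : ℝ => F (-θ)) = Set.range F := by
    ext x
    constructor
    · rintro ⟨θ, rfl⟩; exact ⟨-θ, rfl⟩
    · rintro ⟨θ, rfl⟩; exact ⟨-θ, by simp⟩
  rw [iInf, hrange, ← iInf]
  exact hfirst
end
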